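/- For every N ≥ 1 and every C ≥ 0 there exists C' ≥ 0 such that for every z ∈ ℂ^N: if |Σ_{n=1}^N z_n^k| ≤ C for every k ∈ {1,…,N}, then max_{n ∈ {1,…,N}} |z_n| ≤ C'. In other words, the inverse of the sum-of-power mapping maps bounded sets of power sums to bounded multisets of roots. -/

import Mathlib

open Finset Polynomial

lemma esymm_bound (N : ℕ) (C : ℝ) (hC : 0 ≤ C) (z : Fin N → ℂ)
    (hz : ∀ k ∈ Finset.Icc 1 N, ‖∑ n, z n ^ k‖ ≤ C) :
    ∀ k ≤ N, ‖MvPolynomial.eval z (MvPolynomial.esymm (Fin N) ℂ k)‖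
      ≤ (2 * (C + 1)) ^ k := by
  set M := 2 * (C + 1) with hMdef
  have hM1 : (1:ℝ) ≤ M := by simp only [hMdef]; linarith
  have hM0 : (0:ℝ) ≤ M := by linarith
  intro k
  induction k using Nat.strong_induction_on with
  | _ k ih =>
    intro hk
    rcases Nat.eq_zero_or_pos k with h0 | h0
    · subst h0; simp
    · have newton := congrArg (MvPolynomial.eval z)
        (MvPolynomial.mul_esymm_eq_sum (Fin N) ℂ k)
      simp only [map_mul, map_sum, map_natCast] at newton
      have habs : (k:ℝ) * ‖MvPolynomial.eval z (MvPolynomial.esymm (Fin N) ℂ k)‖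
          = ‖∑ a ∈ {a ∈ Finset.HasAntidiagonal.antidiagonal k | a.1 < k},
            (-1) ^ a.1 * MvPolynomial.eval z (MvPolynomial.esymm (Fin N) ℂ a.1) *
              MvPolynomial.eval z (MvPolynomial.psum (Fin N) ℂ a.2)‖ := by
        rw [← Complex.norm_natCast, ← norm_mul, newton, norm_mul]
        simp
      have hsum : ‖∑ a ∈ {a ∈ Finset.HasAntidiagonal.antidiagonal k | a.1 < k},
          (-1) ^ a.1 * MvPolynomial.eval z (MvPolynomial.esymm (Fin N) ℂ a.1) *
            MvPolynomial.eval z (MvPolynomial.psum (Fin N) ℂ a.2)‖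
          ≤ (k + 1) * (M ^ (k - 1) * C) := by
        calc ‖_‖ ≤ ∑ a ∈ {a ∈ Finset.HasAntidiagonal.antidiagonal k | a.1 < k},
              ‖(-1) ^ a.1 * MvPolynomial.eval z (MvPolynomial.esymm (Fin N) ℂ a.1) *
                MvPolynomial.eval z (MvPolynomial.psum (Fin N) ℂ a.2)‖ :=
              norm_sum_le _ _
          _ ≤ ∑ a ∈ {a ∈ Finset.HasAntidiagonal.antidiagonal k | a.1 < k}, M ^ (k - 1) * C := by
              apply Finset.sum_le_sum
              intro a ha
              simp only [Finset.mem_filter, Finset.mem_antidiagonal] at ha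
              obtain ⟨hak, ha1⟩ := ha
              rw [norm_mul, norm_mul]
              have hneg : ‖(-1:ℂ) ^ a.1‖ = 1 := by simp
              rw [hneg, one_mul]
              have h1 : ‖MvPolynomial.eval z (MvPolynomial.esymm (Fin N) ℂ a.1)‖
                  ≤ M ^ (k - 1) := by
                refine le_trans (ih a.1 ha1 (le_trans (Nat.le_of_lt ha1) hk)) ?_
                exact pow_le_pow_right₀ hM1 (Nat.le_sub_one_of_lt ha1)
              have h2 : ‖MvPolynomial.eval z (MvPolynomial.psum (Fin N) ℂ a.2)‖ ≤ C := by
                have heval : MvPolynomial.eval z (MvPolynomial.psum (Fin N) ℂ a.2)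
                    = ∑ n, z n ^ a.2 := by simp [MvPolynomial.psum]
                rw [heval]
                apply hz
                rw [Finset.mem_Icc]
                have := Finset.HasAntidiagonal.mem_antidiagonal.mp hak; omega
              exact mul_le_mul h1 h2 (norm_nonneg _) (by positivity)
          _ ≤ (k + 1) * (M ^ (k - 1) * C) := by
              rw [Finset.sum_const, nsmul_eq_mul]
              apply mul_le_mul_of_nonneg_right _ (by positivity)
              have := Finset.card_filter_le (Finset.HasAntidiagonal.antidiagonal k) (fun a => a.1 < k)
              rw [Finset.Nat.card_antidiagonal] at this
              exact_mod_cast this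
      have hk1 : ((k:ℝ) + 1) * (M ^ (k - 1) * C) ≤ (k:ℝ) * M ^ k := by
        have hkk : ((k:ℝ) + 1) ≤ 2 * k := by
          have : (1:ℝ) ≤ (k:ℝ) := by exact_mod_cast h0
          linarith
        calc ((k:ℝ) + 1) * (M ^ (k - 1) * C) ≤ (2 * k) * (M ^ (k - 1) * C) :=
              mul_le_mul_of_nonneg_right hkk (by positivity)
          _ = (k:ℝ) * (M ^ (k - 1) * (2 * C)) := by ring
          _ ≤ (k:ℝ) * (M ^ (k - 1) * M) := by
              apply mul_le_mul_of_nonneg_left _ (Nat.cast_nonneg k)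
              apply mul_le_mul_of_nonneg_left _ (by positivity)
              simp only [hMdef]; linarith
          _ = (k:ℝ) * M ^ k := by
              rw [← pow_succ, Nat.sub_add_cancel h0]
      have hfin : (k:ℝ) * ‖MvPolynomial.eval z (MvPolynomial.esymm (Fin N) ℂ k)‖
          ≤ (k:ℝ) * M ^ k := by
        rw [habs]; exact le_trans hsum hk1
      exact le_of_mul_le_mul_left hfin (by exact_mod_cast h0)


lemma root_bound (N : ℕ) (M : ℝ) (hM1 : 1 ≤ M) (s : Multiset ℂ)
    (hcard : Multiset.card s = N)
    (hesymm : ∀ j ≤ N, ‖s.esymm j‖ ≤ M ^ j)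
    (w : ℂ) (hw : w ∈ s) :
    ‖w‖ ≤ 1 + N * M ^ N := by
  have hM0 : (0:ℝ) ≤ M := le_trans zero_le_one hM1
  have hCnn : (0:ℝ) ≤ (N:ℝ) * M ^ N := by positivity
  rcases le_or_gt (‖w‖) 1 with h1 | h1
  · linarith
  -- N ≥ 1
  have hN1 : 1 ≤ N := by
    rcases Multiset.exists_cons_of_mem hw with ⟨t, rfl⟩
    simp at hcard; omega
  set P : Polynomial ℂ := (s.map fun t => X - C t).prod with hP
  have hmonic : ∀ f ∈ s.map fun t => X - C t, f.Monic := by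
    intro f hf
    rcases Multiset.mem_map.mp hf with ⟨r, _, rfl⟩
    exact monic_X_sub_C r
  have hdeg : P.natDegree = N := by
    rw [hP, natDegree_multiset_prod_of_monic _ hmonic, Multiset.map_map]
    simp [hcard]
  have heval : P.eval w = 0 := by
    rw [hP, eval_multiset_prod]
    apply Multiset.prod_eq_zero
    rw [Multiset.map_map]
    refine Multiset.mem_map.mpr ⟨w, hw, ?_⟩
    simp
  have hcoeff : ∀ j ≤ N, ‖P.coeff j‖ ≤ M ^ (N - j) := by
    intro j hj
    rw [hP, Multiset.prod_X_sub_C_coeff s (by omega : j ≤ Multiset.card s), hcard]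
    rw [norm_mul]
    have : ‖(-1:ℂ) ^ (N - j)‖ = 1 := by simp
    rw [this, one_mul]
    exact hesymm _ (Nat.sub_le _ _)
  have hcN : P.coeff N = 1 := by
    rw [hP, Multiset.prod_X_sub_C_coeff s (by omega : N ≤ Multiset.card s), hcard]
    simp [Multiset.esymm]
  -- eval as sum
  have hsum : ∑ j ∈ Finset.range (N + 1), P.coeff j * w ^ j = 0 := by
    rw [← eval_eq_sum_range' (by omega : P.natDegree < N + 1), heval]
  rw [Finset.sum_range_succ, hcN, one_mul] at hsum
  have hwN : w ^ N = -∑ j ∈ Finset.range N, P.coeff j * w ^ j := by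
    linear_combination hsum
  -- bound
  have hb : ‖w‖ ^ N ≤ (N:ℝ) * M ^ N * ‖w‖ ^ (N - 1) := by
    calc ‖w‖ ^ N = ‖w ^ N‖ := by rw [norm_pow]
      _ = ‖∑ j ∈ Finset.range N, P.coeff j * w ^ j‖ := by rw [hwN, norm_neg]
      _ ≤ ∑ j ∈ Finset.range N, ‖P.coeff j * w ^ j‖ := norm_sum_le _ _
      _ ≤ ∑ j ∈ Finset.range N, M ^ N * ‖w‖ ^ (N - 1) := by
          apply Finset.sum_le_sum
          intro j hj
          rw [Finset.mem_range] at hj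
          rw [norm_mul, norm_pow]
          apply mul_le_mul
          · exact le_trans (hcoeff j (le_of_lt hj)) (pow_le_pow_right₀ hM1 (Nat.sub_le _ _))
          · exact pow_le_pow_right₀ (le_of_lt h1) (by omega)
          · positivity
          · positivity
      _ = (N:ℝ) * M ^ N * ‖w‖ ^ (N - 1) := by
          rw [Finset.sum_const, Finset.card_range, nsmul_eq_mul]; ring
  have hpow : ‖w‖ ^ N = ‖w‖ ^ (N - 1) * ‖w‖ := by
    rw [← pow_succ, Nat.sub_add_cancel hN1]
  rw [hpow] at hb
  have hwpos : (0:ℝ) < ‖w‖ ^ (N - 1) := by positivity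
  have : ‖w‖ ≤ (N:ℝ) * M ^ N := by
    have := (mul_le_mul_iff_of_pos_right hwpos).mp (by linarith [hb] : ‖w‖ * ‖w‖ ^ (N-1) ≤ ((N:ℝ) * M ^ N) * ‖w‖ ^ (N-1))
    exact this
  linarith

/-- The inverse of the complex sum-of-power mapping maps bounded sets of power
sums to bounded multisets of roots: for every `N ≥ 1` and `C ≥ 0` there is a
`C' ≥ 0` such that whenever all the power sums `∑ z_n^k`, `k = 1,…,N`, have
modulus at most `C`, every entry `z_n` has modulus at most `C'`. -/
theorem inverse_sum_of_power_bounded (N : ℕ) (hN : 1 ≤ N) (C : ℝ) (hC : 0 ≤ C) :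
    ∃ C' : ℝ, 0 ≤ C' ∧ ∀ z : Fin N → ℂ,
      (∀ k ∈ Finset.Icc 1 N, ‖∑ n, z n ^ k‖ ≤ C) →
      ∀ n, ‖z n‖ ≤ C' := by
  set M := 2 * (C + 1) with hMdef
  have hM1 : (1:ℝ) ≤ M := by simp only [hMdef]; linarith
  refine ⟨1 + N * M ^ N, by positivity, ?_⟩
  intro z hz n
  set s : Multiset ℂ := Finset.univ.val.map z with hs
  have hcard : Multiset.card s = N := by simp [hs]
  have hesymm : ∀ j ≤ N, ‖s.esymm j‖ ≤ M ^ j := by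
    intro j hj
    have hconv : MvPolynomial.eval z (MvPolynomial.esymm (Fin N) ℂ j) = s.esymm j := by
      have h : MvPolynomial.eval z (MvPolynomial.esymm (Fin N) ℂ j)
          = MvPolynomial.aeval z (MvPolynomial.esymm (Fin N) ℂ j) := by
        rw [← MvPolynomial.coe_aeval_eq_eval]; rfl
      rw [h, MvPolynomial.aeval_esymm_eq_multiset_esymm]
    rw [← hconv]
    exact esymm_bound N C hC z hz j hj
  exact root_bound N M hM1 s hcard hesymm (z n)
    (Multiset.mem_map.mpr ⟨n, Finset.mem_val.mpr (Finset.mem_univ n), rfl⟩)
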